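/- Let m > k ≥ 1 be integers, set Q = (m+k)/(m−k), and define S(a) = ∫₀^Q [τ^{m−1} + (k−m)·τ^m]·e^{−aτ} dτ for real a. Then S(0) < 0, and S(a) > 0 for every real a ≥ m·(m−k). -/

import Mathlib

/-- S(a) = ∫₀^Q [τ^{m−1} + (k−m)τ^m] e^{−aτ} dτ, with Q = (m+k)/(m−k). -/
noncomputable def Sint (m k : ℕ) (a : ℝ) : ℝ :=
  ∫ τ in (0 : ℝ)..(((m : ℝ) + (k : ℝ)) / ((m : ℝ) - (k : ℝ))),
    (τ ^ (m - 1) + ((k : ℝ) - (m : ℝ)) * τ ^ m) * Real.exp (-a * τ)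

lemma sint_key (m k : ℕ) (hk : 1 ≤ k) (hkm : k < m) (a : ℝ) :
    Sint m k a = (((m : ℝ) + k) / ((m : ℝ) - k)) ^ m
        * Real.exp (-a * (((m : ℝ) + k) / ((m : ℝ) - k))) / m
      + (a / m + ((k : ℝ) - m)) *
        ∫ τ in (0 : ℝ)..(((m : ℝ) + k) / ((m : ℝ) - k)),
          τ ^ m * Real.exp (-a * τ) := by
  have hmne : (m : ℝ) ≠ 0 := by
    have : 0 < m := by omega
    exact_mod_cast this.ne'
  set Q : ℝ := ((m : ℝ) + k) / ((m : ℝ) - k) with hQdef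
  have hF : ∀ τ : ℝ, HasDerivAt (fun τ : ℝ => τ ^ m / m * Real.exp (-a * τ))
      ((τ ^ (m - 1) - a / m * τ ^ m) * Real.exp (-a * τ)) τ := by
    intro τ
    have h1 : HasDerivAt (fun τ : ℝ => τ ^ m / m) ((m : ℝ) * τ ^ (m - 1) / m) τ :=
      (hasDerivAt_pow m τ).div_const m
    have h2 : HasDerivAt (fun τ : ℝ => Real.exp (-a * τ)) (Real.exp (-a * τ) * (-a)) τ := by
      simpa using ((hasDerivAt_id τ).const_mul (-a)).exp
    have : HasDerivAt (fun τ : ℝ => τ ^ m / m * Real.exp (-a * τ)) _ τ := h1.mul h2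
    convert this using 1
    rw [mul_div_cancel_left₀ _ hmne]
    ring
  have hc1 : Continuous fun τ : ℝ => (τ ^ (m - 1) - a / m * τ ^ m) * Real.exp (-a * τ) := by
    fun_prop
  have hc2 : Continuous fun τ : ℝ => τ ^ m * Real.exp (-a * τ) := by fun_prop
  have hderiv_int : (∫ τ in (0 : ℝ)..Q, (τ ^ (m - 1) - a / m * τ ^ m) * Real.exp (-a * τ))
      = Q ^ m * Real.exp (-a * Q) / m := by
    rw [intervalIntegral.integral_eq_sub_of_hasDerivAt (fun τ _ => hF τ)
      (hc1.intervalIntegrable _ _)]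
    have hm0 : m ≠ 0 := by omega
    simp [zero_pow hm0]
    ring
  have split : (fun τ : ℝ => (τ ^ (m - 1) + ((k : ℝ) - m) * τ ^ m) * Real.exp (-a * τ))
      = fun τ : ℝ => (τ ^ (m - 1) - a / m * τ ^ m) * Real.exp (-a * τ)
        + (a / m + ((k : ℝ) - m)) * (τ ^ m * Real.exp (-a * τ)) := by
    funext τ
    field_simp
    ring
  unfold Sint
  rw [show (∫ τ in (0:ℝ)..Q, (τ ^ (m - 1) + ((k : ℝ) - m) * τ ^ m) * Real.exp (-a * τ))
      = ∫ τ in (0:ℝ)..Q, ((τ ^ (m - 1) - a / m * τ ^ m) * Real.exp (-a * τ)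
        + (a / m + ((k : ℝ) - m)) * (τ ^ m * Real.exp (-a * τ))) from by rw [split]]
  rw [intervalIntegral.integral_add (hc1.intervalIntegrable _ _)
    ((hc2.intervalIntegrable _ _).const_mul _), hderiv_int,
    intervalIntegral.integral_const_mul]

/-- S(0) < 0, and S(a) > 0 for every a ≥ m(m−k). -/
theorem stmt_19 (m k : ℕ) (hk : 1 ≤ k) (hkm : k < m) :
    Sint m k 0 < 0 ∧
    ∀ a : ℝ, (m : ℝ) * ((m : ℝ) - (k : ℝ)) ≤ a → 0 < Sint m k a := by
  have hm2 : 2 ≤ m := by omega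
  have hkR : (k : ℝ) < m := by exact_mod_cast hkm
  have hk1 : (1 : ℝ) ≤ k := by exact_mod_cast hk
  have hmk : (0 : ℝ) < (m : ℝ) - k := by linarith
  have hmR : (2 : ℝ) ≤ m := by exact_mod_cast hm2
  have hQpos : 0 < ((m : ℝ) + k) / ((m : ℝ) - k) := div_pos (by linarith) hmk
  set Q : ℝ := ((m : ℝ) + k) / ((m : ℝ) - k) with hQdef
  have hQm : ((m : ℝ) - k) * Q = (m : ℝ) + k := by
    rw [hQdef]; field_simp
  have hQmp : 0 < Q ^ m := pow_pos hQpos m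
  constructor
  · have h := sint_key m k hk hkm 0
    rw [← hQdef] at h
    simp only [neg_zero, zero_mul, Real.exp_zero, mul_one, zero_div, zero_add] at h
    rw [h, integral_pow]
    have hqq : ((k : ℝ) - m) * Q ^ (m + 1) = -(((m : ℝ) + k) * Q ^ m) := by
      rw [pow_succ]
      have hkq : ((k : ℝ) - m) * Q = -((m : ℝ) + k) := by linarith
      linear_combination Q ^ m * hkq
    have hz : (0 : ℝ) ^ (m + 1) = 0 := zero_pow (by omega)
    rw [hz, sub_zero, ← mul_div_assoc, hqq]
    rw [div_add_div _ _ (by linarith : (m : ℝ) ≠ 0) (by linarith : (m : ℝ) + 1 ≠ 0)]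
    apply div_neg_of_neg_of_pos _ (by nlinarith)
    nlinarith [hQmp, hmR, hk1, mul_pos hQmp (by linarith : (0:ℝ) < (m:ℝ) + 1)]
  · intro a ha
    have h := sint_key m k hk hkm a
    rw [← hQdef] at h
    rw [h]
    have hmpos : (0 : ℝ) < m := by linarith
    have hc : 0 ≤ a / m + ((k : ℝ) - m) := by
      have : (m : ℝ) - k ≤ a / m := by
        rw [le_div_iff₀ hmpos]
        linarith [ha]
      linarith
    have hI : 0 ≤ ∫ τ in (0 : ℝ)..Q, τ ^ m * Real.exp (-a * τ) := by
      apply intervalIntegral.integral_nonneg hQpos.le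
      intro τ hτ
      have : 0 ≤ τ := hτ.1
      positivity
    have hpos : 0 < Q ^ m * Real.exp (-a * Q) / m :=
      div_pos (mul_pos hQmp (Real.exp_pos _)) hmpos
    linarith [mul_nonneg hc hI]
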